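/- Suppose d is even and exactly two of η(e0), η(e1), η(e2) equal -1 while the third equals 1. Then the number of points (x0 : x1 : x2) ∈ ℙ²(F_q) with C(x0, x1, x2) = 0 equals (3q² - 6q + 43)/8; equivalently, writing n = (q-5)/2 for the degree of the nonlinear part of C, it equals n(n + q - 1)/2 + (2q + 1). -/

import Mathlib

open MvPolynomial

/-- The polynomial `C = X0^d + X1^d + X2^d + (e0·X0 + e1·X1 + e2·X2)^d` over `F_q`. -/
noncomputable def fermatSlice (F : Type) [Field F] (d : ℕ) (e0 e1 e2 : F) :
    MvPolynomial (Fin 3) F :=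
  X 0 ^ d + X 1 ^ d + X 2 ^ d +
    (MvPolynomial.C e0 * X 0 + MvPolynomial.C e1 * X 1 + MvPolynomial.C e2 * X 2) ^ d

open Finset

section Aux

variable {F : Type} [Field F] [Fintype F] [DecidableEq F]

private lemma tri (a : F) :
    quadraticChar F a = 0 ∨ quadraticChar F a = 1 ∨ quadraticChar F a = -1 := by
  by_cases h : a = 0
  · left; simp [h]
  · right; exact quadraticChar_dichotomy h

lemma sum_comp_count {α : Type} [Fintype α] (f : α → ℤ) (K : Finset ℤ)
    (hf : ∀ z, f z ∈ K) (g : ℤ → ℤ) :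
    ∑ k ∈ K, g k * ((univ.filter fun z => f z = k).card : ℤ) = ∑ z, g (f z) := by
  calc ∑ k ∈ K, g k * ((univ.filter fun z => f z = k).card : ℤ)
      = ∑ k ∈ K, ∑ z : α, if f z = k then g k else 0 := by
        refine Finset.sum_congr rfl fun k _ => ?_
        rw [← Finset.sum_filter, Finset.sum_const, nsmul_eq_mul, mul_comm]
    _ = ∑ z : α, ∑ k ∈ K, if f z = k then g k else 0 := Finset.sum_comm
    _ = ∑ z, g (f z) := by
        refine Finset.sum_congr rfl fun z _ => ?_
        rw [Finset.sum_ite_eq K (f z) g]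
        simp [hf z]

lemma pair_count {α : Type} [Fintype α] (f : α → ℤ) (K : Finset ℤ)
    (hf : ∀ z, f z ∈ K) :
    ∑ z, ∑ z', (if f z = f z' then (1:ℤ) else 0)
      = ∑ k ∈ K, ((univ.filter fun z => f z = k).card : ℤ)^2 := by
  have h1 : ∀ z, ∑ z', (if f z = f z' then (1:ℤ) else 0)
      = ((univ.filter fun z' => f z' = f z).card : ℤ) := by
    intro z
    rw [← Finset.sum_boole]
    exact Finset.sum_congr rfl fun z' _ => by simp [eq_comm]
  calc ∑ z, ∑ z', (if f z = f z' then (1:ℤ) else 0)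
      = ∑ z, ((univ.filter fun z' => f z' = f z).card : ℤ) :=
        Finset.sum_congr rfl fun z _ => h1 z
    _ = ∑ z, (fun k => ((univ.filter fun z => f z = k).card : ℤ)) (f z) := rfl
    _ = ∑ k ∈ K, (fun k => ((univ.filter fun z => f z = k).card : ℤ)) k
          * ((univ.filter fun z => f z = k).card : ℤ) :=
        (sum_comp_count f K hf (fun k => ((univ.filter fun z => f z = k).card : ℤ))).symm
    _ = ∑ k ∈ K, ((univ.filter fun z => f z = k).card : ℤ)^2 := by
        refine Finset.sum_congr rfl fun k _ => ?_; ring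


section Chi

variable {F : Type} [Field F] [Fintype F] [DecidableEq F]

lemma sum_chi_shift (hchar : ringChar F ≠ 2) (w : F) :
    ∑ z : F, quadraticChar F (w + z) = 0 := by
  rw [Fintype.sum_equiv (Equiv.addLeft w) _ (fun z => quadraticChar F z) (fun z => by simp)]
  exact quadraticChar_sum_zero hchar

lemma sum_chi_sq' : ∑ z : F, (quadraticChar F z)^2 = (Fintype.card F : ℤ) - 1 := by
  have h1 : ∀ z : F, (quadraticChar F z)^2 = 1 - (if z = 0 then (1:ℤ) else 0) := by
    intro z
    by_cases hz : z = 0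
    · simp [hz]
    · rw [quadraticChar_sq_one hz]; simp [hz]
  rw [Finset.sum_congr rfl fun z _ => h1 z, Finset.sum_sub_distrib, Finset.sum_boole,
    Finset.sum_const, Finset.filter_eq', Finset.card_univ]
  simp

lemma sum_chi_sq (w : F) :
    ∑ z : F, (quadraticChar F (w + z))^2 = (Fintype.card F : ℤ) - 1 := by
  rw [Fintype.sum_equiv (Equiv.addLeft w) _ (fun z => (quadraticChar F z)^2) (fun z => by simp)]
  exact sum_chi_sq'

lemma key_sum (hchar : ringChar F ≠ 2) {w : F} (hw : w ≠ 0) :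
    ∑ z : F, quadraticChar F z * quadraticChar F (w + z) = -1 := by
  have h0 : ∑ z : F, quadraticChar F z * quadraticChar F (w + z)
      = ∑ z ∈ univ.erase (0:F), quadraticChar F (w * z⁻¹ + 1) := by
    rw [← Finset.add_sum_erase univ _ (mem_univ (0:F))]
    simp only [quadraticChar_zero, zero_mul, zero_add]
    refine Finset.sum_congr rfl fun z hz => ?_
    have hz0 : z ≠ 0 := (Finset.mem_erase.mp hz).1
    rw [← map_mul]
    have : z * (w + z) = z^2 * (w * z⁻¹ + 1) := by field_simp
    rw [this, map_mul, quadraticChar_sq_one' hz0, one_mul]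
  rw [h0]
  rw [Finset.sum_nbij' (i := fun z => w * z⁻¹ + 1) (j := fun u => w * (u - 1)⁻¹)
    (t := univ.erase (1:F)) (g := fun u => quadraticChar F u)]
  · have h2 := Finset.add_sum_erase univ (fun u => quadraticChar F u) (mem_univ (1:F))
    rw [quadraticChar_sum_zero hchar] at h2
    simp only [map_one] at h2
    linarith
  · intro z hz
    have hz0 : z ≠ 0 := (Finset.mem_erase.mp hz).1
    simp only [Finset.mem_erase, Finset.mem_univ, and_true]
    intro hcon
    have : w * z⁻¹ = 0 := by linear_combination hcon
    simp [hw, hz0] at this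
  · intro u hu
    have hu1 : u ≠ 1 := (Finset.mem_erase.mp hu).1
    simp only [Finset.mem_erase, Finset.mem_univ, and_true]
    have : u - 1 ≠ 0 := sub_ne_zero.mpr hu1
    simp [hw, this]
  · intro z hz
    have hz0 : z ≠ 0 := (Finset.mem_erase.mp hz).1
    have : w * z⁻¹ + 1 - 1 = w * z⁻¹ := by ring
    rw [this]
    field_simp
  · intro u hu
    have hu1 : u ≠ 1 := (Finset.mem_erase.mp hu).1
    have h1 : u - 1 ≠ 0 := sub_ne_zero.mpr hu1
    field_simp
    ring
  · intro z hz; rfl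


section Buck

variable {F : Type} [Field F] [Fintype F] [DecidableEq F]

private lemma tri' (a : F) :
    quadraticChar F a = 0 ∨ quadraticChar F a = 1 ∨ quadraticChar F a = -1 := by
  by_cases h : a = 0
  · left; simp [h]
  · right; exact quadraticChar_dichotomy h

private lemma chi_neg (hneg : quadraticChar F (-1) = 1) (a : F) :
    quadraticChar F (-a) = quadraticChar F a := by
  rw [show (-a : F) = -1 * a by ring, map_mul, hneg, one_mul]

lemma bucket (hneg : quadraticChar F (-1) = 1) {w : F} (hw : w ≠ 0)
    (σ : ℤ) (hσ : σ = 1 ∨ σ = -1) :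
    ((univ.filter fun z : F => quadraticChar F z + quadraticChar F (w + z) = σ).card : ℤ)
      = if quadraticChar F w = σ then 2 else 0 := by
  have claim : ∀ z : F, (quadraticChar F z + quadraticChar F (w + z) = σ)
      ↔ ((z = 0 ∨ z = -w) ∧ quadraticChar F w = σ) := by
    intro z
    constructor
    · intro hz
      by_cases hz0 : z = 0
      · subst hz0
        rw [quadraticChar_zero, add_zero, zero_add] at hz
        exact ⟨Or.inl rfl, hz⟩
      by_cases hzw : z = -w
      · subst hzw
        rw [show w + -w = 0 by ring, quadraticChar_zero, add_zero, chi_neg hneg] at hz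
        exact ⟨Or.inr rfl, hz⟩
      · exfalso
        have hwz : w + z ≠ 0 := fun hc => hzw (by linear_combination hc)
        rcases quadraticChar_dichotomy hz0 with h1 | h1 <;>
          rcases quadraticChar_dichotomy hwz with h2 | h2 <;>
            rw [h1, h2] at hz <;> rcases hσ with rfl | rfl <;> omega
    · rintro ⟨rfl | rfl, hcw⟩
      · rw [quadraticChar_zero, add_zero, zero_add]; exact hcw
      · rw [show w + -w = 0 by ring, quadraticChar_zero, add_zero, chi_neg hneg]
        exact hcw
  rw [Finset.filter_congr (fun z _ => claim z)]
  by_cases hcw : quadraticChar F w = σ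
  · rw [if_pos hcw]
    have : univ.filter (fun z : F => (z = 0 ∨ z = -w) ∧ quadraticChar F w = σ)
        = ({0, -w} : Finset F) := by
      ext z
      simp [hcw]
    rw [this, Finset.card_insert_of_notMem (by simp [eq_comm, neg_eq_zero, hw]),
      Finset.card_singleton]
    rfl
  · rw [if_neg hcw]
    have : univ.filter (fun z : F => (z = 0 ∨ z = -w) ∧ quadraticChar F w = σ)
        = (∅ : Finset F) := by
      ext z
      simp only [mem_filter, mem_univ, true_and, Finset.notMem_empty, iff_false]
      rintro ⟨_, hc⟩
      exact hcw hc
    rw [this]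
    simp


noncomputable def K5 : Finset ℤ := {-2, -1, 0, 1, 2}

lemma K5sum (g : ℤ → ℤ) : ∑ k ∈ K5, g k = g (-2) + g (-1) + g 0 + g 1 + g 2 := by
  show ∑ k ∈ ({-2, -1, 0, 1, 2} : Finset ℤ), g k = _
  rw [Finset.sum_insert (by decide), Finset.sum_insert (by decide),
    Finset.sum_insert (by decide), Finset.sum_insert (by decide), Finset.sum_singleton]
  ring

section Count

variable {F : Type} [Field F] [Fintype F] [DecidableEq F]

lemma hfK5 (w : F) (z : F) :
    quadraticChar F z + quadraticChar F (w + z) ∈ K5 := by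
  rcases tri' z with h1 | h1 | h1 <;> rcases tri' (w + z) with h2 | h2 | h2 <;>
    rw [h1, h2] <;> decide

lemma Tw (hchar : ringChar F ≠ 2) (hneg : quadraticChar F (-1) = 1)
    {w : F} (hw : w ≠ 0) :
    8 * (∑ z : F, ∑ z' : F, if quadraticChar F z + quadraticChar F (w + z)
        = quadraticChar F z' + quadraticChar F (w + z') then (1:ℤ) else 0)
      = 3 * (Fintype.card F : ℤ)^2 - 10 * (Fintype.card F : ℤ) + 47 := by
  set q : ℤ := (Fintype.card F : ℤ) with hq
  set f : F → ℤ := fun z => quadraticChar F z + quadraticChar F (w + z) with hf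
  have hfK : ∀ z, f z ∈ K5 := hfK5 w
  rw [pair_count f K5 hfK]
  set c : ℤ → ℤ := fun k => ((univ.filter fun z => f z = k).card : ℤ) with hc
  rw [show ∑ k ∈ K5, ((univ.filter fun z => f z = k).card : ℤ)^2
    = ∑ k ∈ K5, (fun k => (c k)^2) k from rfl, K5sum]
  have e0 := sum_comp_count f K5 hfK (fun _ => 1)
  rw [K5sum (fun k => 1 * c k)] at e0
  have he0r : ∑ z : F, (fun _ => (1:ℤ)) (f z) = q := by
    simp [hq, Finset.card_univ]
  rw [he0r] at e0
  have e1 := sum_comp_count f K5 hfK id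
  rw [K5sum (fun k => id k * c k)] at e1
  have he1r : ∑ z : F, id (f z) = 0 := by
    show ∑ z : F, (quadraticChar F z + quadraticChar F (w + z)) = 0
    rw [Finset.sum_add_distrib, quadraticChar_sum_zero hchar, sum_chi_shift hchar]
    ring
  rw [he1r] at e1
  have e2 := sum_comp_count f K5 hfK (fun k => k^2)
  rw [K5sum (fun k => k^2 * c k)] at e2
  have he2r : ∑ z : F, (f z)^2 = 2 * q - 4 := by
    have hpt : ∀ z : F, (f z)^2 = (quadraticChar F z)^2 + (quadraticChar F (w + z))^2
        + 2 * (quadraticChar F z * quadraticChar F (w + z)) := by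
      intro z; rw [hf]; ring
    rw [Finset.sum_congr rfl fun z _ => hpt z, Finset.sum_add_distrib,
      Finset.sum_add_distrib, ← Finset.mul_sum, key_sum hchar hw, sum_chi_sq',
      sum_chi_sq w]
    ring
  rw [he2r] at e2
  simp only [id_eq] at e1
  norm_num at e0 e1 e2
  have b1 : c 1 = if quadraticChar F w = 1 then 2 else 0 := bucket hneg hw 1 (Or.inl rfl)
  have bm1 : c (-1) = if quadraticChar F w = -1 then 2 else 0 := bucket hneg hw (-1) (Or.inr rfl)
  have hc1c : (c 1 = 2 ∧ c (-1) = 0) ∨ (c 1 = 0 ∧ c (-1) = 2) := by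
    rcases quadraticChar_dichotomy hw with hcw | hcw
    · left; rw [b1, bm1, if_pos hcw, if_neg (by rw [hcw]; decide)]; exact ⟨rfl, rfl⟩
    · right; rw [b1, bm1, if_pos hcw, if_neg (by rw [hcw]; decide)]; exact ⟨rfl, rfl⟩
  rcases hc1c with ⟨h1, h2⟩ | ⟨h1, h2⟩ <;> rw [h1, h2] at e0 e1 e2 ⊢
  · have hA : c 2 - c (-2) = -1 := by linarith
    have hAB : 2 * (c 2 + c (-2)) = q - 3 := by linarith
    have hM : 2 * c 0 = q - 1 := by linarith
    have h4 : (2 * (c 2 + c (-2)))^2 = (q - 3)^2 := by rw [hAB]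
    have h5 : (c 2 - c (-2))^2 = 1 := by rw [hA]; norm_num
    have h6 : (2 * c 0)^2 = (q - 1)^2 := by rw [hM]
    linear_combination h4 + 4 * h5 + 2 * h6
  · have hA : c 2 - c (-2) = 1 := by linarith
    have hAB : 2 * (c 2 + c (-2)) = q - 3 := by linarith
    have hM : 2 * c 0 = q - 1 := by linarith
    have h4 : (2 * (c 2 + c (-2)))^2 = (q - 3)^2 := by rw [hAB]
    have h5 : (c 2 - c (-2))^2 = 1 := by rw [hA]; norm_num
    have h6 : (2 * c 0)^2 = (q - 1)^2 := by rw [hM]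
    linear_combination h4 + 4 * h5 + 2 * h6

lemma T0 (hchar : ringChar F ≠ 2) :
    8 * (∑ z : F, ∑ z' : F, if quadraticChar F z + quadraticChar F ((0:F) + z)
        = quadraticChar F z' + quadraticChar F ((0:F) + z') then (1:ℤ) else 0)
      = 4 * ((Fintype.card F : ℤ) - 1)^2 + 8 := by
  set q : ℤ := (Fintype.card F : ℤ) with hq
  set f : F → ℤ := fun z => quadraticChar F z + quadraticChar F ((0:F) + z) with hf
  have hfK : ∀ z, f z ∈ K5 := hfK5 0
  rw [pair_count f K5 hfK]
  set c : ℤ → ℤ := fun k => ((univ.filter fun z => f z = k).card : ℤ) with hc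
  rw [show ∑ k ∈ K5, ((univ.filter fun z => f z = k).card : ℤ)^2
    = ∑ k ∈ K5, (fun k => (c k)^2) k from rfl, K5sum]
  have hfz : ∀ z : F, f z = 2 * quadraticChar F z := by
    intro z; rw [hf]; simp [zero_add]; ring
  have hodd : ∀ σ : ℤ, σ = 1 ∨ σ = -1 → c σ = 0 := by
    intro σ hσ
    rw [hc]
    norm_num
    intro z
    rw [hfz z]
    rcases tri' z with h | h | h <;> rw [h] <;> rcases hσ with rfl | rfl <;> omega
  have h1 : c 1 = 0 := hodd 1 (Or.inl rfl)
  have h2 : c (-1) = 0 := hodd (-1) (Or.inr rfl)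
  have h0 : c 0 = 1 := by
    rw [hc]
    norm_num
    rw [show (univ.filter fun z : F => f z = 0) = {0} from ?_]
    · exact Finset.card_singleton 0
    ext z
    simp only [mem_filter, mem_univ, true_and, Finset.mem_singleton]
    rw [hfz z]
    constructor
    · intro hz
      have : quadraticChar F z = 0 := by linarith
      exact quadraticChar_eq_zero_iff.mp this
    · rintro rfl; simp
  have e0 := sum_comp_count f K5 hfK (fun _ => 1)
  rw [K5sum (fun k => 1 * c k)] at e0
  have he0r : ∑ z : F, (fun _ => (1:ℤ)) (f z) = q := by
    simp [hq, Finset.card_univ]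
  rw [he0r] at e0
  have e1 := sum_comp_count f K5 hfK id
  rw [K5sum (fun k => id k * c k)] at e1
  have he1r : ∑ z : F, id (f z) = 0 := by
    show ∑ z : F, (quadraticChar F z + quadraticChar F ((0:F) + z)) = 0
    rw [Finset.sum_add_distrib, quadraticChar_sum_zero hchar, sum_chi_shift hchar]
    ring
  rw [he1r] at e1
  simp only [id_eq] at e1
  norm_num at e0 e1
  rw [h1, h2, h0] at e0 ⊢
  have hA : c 2 = c (-2) := by linarith
  rw [hA] at e0 ⊢
  have h4 : (2 * c (-2))^2 = (q - 1)^2 := by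
    rw [show 2 * c (-2) = q - 1 by linarith]
  linear_combination 4 * h4

def psi3 (F : Type) [Field F] : (F × F × F) ≃ (F × F × F) :=
  { toFun := fun u => (-u.2.1, u.1 + u.2.1, u.2.2)
    invFun := fun v => (v.1 + v.2.1, -v.1, v.2.2)
    left_inv := fun u => by
      obtain ⟨w, z, z'⟩ := u
      simp only [Prod.mk.injEq]
      refine ⟨by ring, by ring, trivial⟩
    right_inv := fun v => by
      obtain ⟨a, b, c⟩ := v
      simp only [Prod.mk.injEq]
      refine ⟨by ring, by ring, trivial⟩ }

lemma count_main (hchar : ringChar F ≠ 2) (hneg : quadraticChar F (-1) = 1) :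
    8 * ((univ.filter (fun t : F × F × F => quadraticChar F t.1 + quadraticChar F t.2.1
        = quadraticChar F t.2.2 + quadraticChar F (t.1 + t.2.1 + t.2.2))).card : ℤ)
      = ((Fintype.card F : ℤ) - 1) * (3 * (Fintype.card F : ℤ)^2 - 6 * (Fintype.card F : ℤ) + 43)
        + 8 := by
  set q : ℤ := (Fintype.card F : ℤ) with hq
  set P : F × F × F → Prop := fun t => quadraticChar F t.1 + quadraticChar F t.2.1
      = quadraticChar F t.2.2 + quadraticChar F (t.1 + t.2.1 + t.2.2) with hP
  have hcast : ((univ.filter P).card : ℤ) = ∑ t : F × F × F, if P t then (1:ℤ) else 0 :=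
    (Finset.sum_boole _ _).symm
  rw [hcast]
  have hsum : ∑ t : F × F × F, (if P t then (1:ℤ) else 0)
      = ∑ u : F × F × F, (if P (psi3 F u) then (1:ℤ) else 0) :=
    (Fintype.sum_equiv (psi3 F) _ _ (fun u => rfl)).symm
  rw [hsum]
  have hpt : ∀ u : F × F × F, (if P (psi3 F u) then (1:ℤ) else 0)
      = (if quadraticChar F u.2.1 + quadraticChar F (u.1 + u.2.1)
          = quadraticChar F u.2.2 + quadraticChar F (u.1 + u.2.2) then (1:ℤ) else 0) := by
    intro u
    obtain ⟨w, z, z'⟩ := u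
    have hiff : P (psi3 F (w, z, z')) ↔ (quadraticChar F z + quadraticChar F (w + z)
        = quadraticChar F z' + quadraticChar F (w + z')) := by
      show (quadraticChar F (-z) + quadraticChar F (w + z)
        = quadraticChar F z' + quadraticChar F (-z + (w + z) + z')) ↔ _
      rw [chi_neg hneg, show -z + (w + z) + z' = w + z' by ring]
    rw [if_congr hiff rfl rfl]
  rw [Finset.sum_congr rfl fun u _ => hpt u]
  simp only [Fintype.sum_prod_type]
  rw [← Finset.add_sum_erase univ (fun w : F => ∑ z : F, ∑ z' : F,
      if quadraticChar F z + quadraticChar F (w + z)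
        = quadraticChar F z' + quadraticChar F (w + z') then (1:ℤ) else 0) (mem_univ (0:F))]
  rw [mul_add, T0 hchar, Finset.mul_sum,
    Finset.sum_congr rfl fun w hw => Tw hchar hneg (Finset.mem_erase.mp hw).1,
    Finset.sum_const, Finset.card_erase_of_mem (mem_univ 0), Finset.card_univ,
    nsmul_eq_mul]
  have hcast2 : ((Fintype.card F - 1 : ℕ) : ℤ) = q - 1 := by
    have := Fintype.card_pos (α := F)
    push_cast [Nat.cast_sub this]
    ring
  rw [hcast2]
  ring

def mapE (F : Type) [Field F] (a b c : F) (ha : a ≠ 0) (hb : b ≠ 0) (hc : c ≠ 0) :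
    (F × F × F) ≃ (F × F × F) where
  toFun t := (a * t.1, b * t.2.1, c * t.2.2)
  invFun s := (a⁻¹ * s.1, b⁻¹ * s.2.1, c⁻¹ * s.2.2)
  left_inv t := by
    obtain ⟨x, y, z⟩ := t
    simp [Prod.mk.injEq, inv_mul_cancel_left₀, ha, hb, hc]
  right_inv s := by
    obtain ⟨x, y, z⟩ := s
    simp [Prod.mk.injEq, mul_inv_cancel_left₀, ha, hb, hc]

def swap23E (F : Type) : (F × F × F) ≃ (F × F × F) :=
  ⟨fun t => (t.1, t.2.2, t.2.1), fun t => (t.1, t.2.2, t.2.1), fun t => rfl, fun t => rfl⟩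

def rotE (F : Type) : (F × F × F) ≃ (F × F × F) :=
  ⟨fun t => (t.2.1, t.2.2, t.1), fun t => (t.2.2, t.1, t.2.1), fun t => rfl, fun t => rfl⟩

lemma count_cond (hchar : ringChar F ≠ 2) (hneg : quadraticChar F (-1) = 1)
    {e0 e1 e2 : F}
    (hcase :
      (quadraticChar F e0 = -1 ∧ quadraticChar F e1 = -1 ∧ quadraticChar F e2 = 1) ∨
      (quadraticChar F e0 = -1 ∧ quadraticChar F e1 = 1 ∧ quadraticChar F e2 = -1) ∨
      (quadraticChar F e0 = 1 ∧ quadraticChar F e1 = -1 ∧ quadraticChar F e2 = -1)) :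
    8 * ((univ.filter (fun t : F × F × F =>
        quadraticChar F t.1 + quadraticChar F t.2.1 + quadraticChar F t.2.2
          + quadraticChar F (e0 * t.1 + e1 * t.2.1 + e2 * t.2.2) = 0)).card : ℤ)
      = ((Fintype.card F : ℤ) - 1) * (3 * (Fintype.card F : ℤ)^2 - 6 * (Fintype.card F : ℤ) + 43)
        + 8 := by
  have hne : ∀ x : F, quadraticChar F x = 1 ∨ quadraticChar F x = -1 → x ≠ 0 := by
    intro x hx hc
    subst hc
    rcases hx with hx | hx <;> rw [quadraticChar_zero] at hx <;> omega
  rw [← count_main hchar hneg]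
  congr 1
  norm_cast
  rcases hcase with ⟨h0, h1, h2⟩ | ⟨h0, h1, h2⟩ | ⟨h0, h1, h2⟩
  · apply Finset.card_equiv
      (mapE F e0 e1 e2 (hne _ (Or.inr h0)) (hne _ (Or.inr h1)) (hne _ (Or.inl h2)))
    intro t
    obtain ⟨x, y, z⟩ := t
    simp only [Finset.mem_filter, Finset.mem_univ, true_and]
    show _ ↔ (quadraticChar F (e0 * x) + quadraticChar F (e1 * y)
      = quadraticChar F (e2 * z) + quadraticChar F (e0 * x + e1 * y + e2 * z))
    rw [map_mul, map_mul, map_mul, h0, h1, h2]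
    constructor <;> intro hh <;> linarith
  · apply Finset.card_equiv
      ((mapE F e0 e1 e2 (hne _ (Or.inr h0)) (hne _ (Or.inl h1)) (hne _ (Or.inr h2))).trans
        (swap23E F))
    intro t
    obtain ⟨x, y, z⟩ := t
    simp only [Finset.mem_filter, Finset.mem_univ, true_and, Equiv.trans_apply]
    show _ ↔ (quadraticChar F (e0 * x) + quadraticChar F (e2 * z)
      = quadraticChar F (e1 * y) + quadraticChar F (e0 * x + e2 * z + e1 * y))
    rw [map_mul, map_mul, map_mul, h0, h1, h2,
      show e0 * x + e2 * z + e1 * y = e0 * x + e1 * y + e2 * z by ring]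
    constructor <;> intro hh <;> linarith
  · apply Finset.card_equiv
      ((mapE F e0 e1 e2 (hne _ (Or.inl h0)) (hne _ (Or.inr h1)) (hne _ (Or.inr h2))).trans
        (rotE F))
    intro t
    obtain ⟨x, y, z⟩ := t
    simp only [Finset.mem_filter, Finset.mem_univ, true_and, Equiv.trans_apply]
    show _ ↔ (quadraticChar F (e1 * y) + quadraticChar F (e2 * z)
      = quadraticChar F (e0 * x) + quadraticChar F (e1 * y + e2 * z + e0 * x))
    rw [map_mul, map_mul, map_mul, h0, h1, h2,
      show e1 * y + e2 * z + e0 * x = e0 * x + e1 * y + e2 * z by ring]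
    constructor <;> intro hh <;> linarith

end Count

def e3equiv (F : Type) : (Fin 3 → F) ≃ F × F × F where
  toFun x := (x 0, x 1, x 2)
  invFun t := ![t.1, t.2.1, t.2.2]
  left_inv x := by funext i; fin_cases i <;> rfl
  right_inv t := rfl

/-- If `d` is even and exactly two of `η(e0), η(e1), η(e2)` equal `-1`
while the third equals `1`, then the number of points of `ℙ²(F_q)` on the curve `C = 0`
equals `(3q² - 6q + 43)/8` (i.e. `n(n + q - 1)/2 + (2q + 1)` with `n = (q-5)/2`). -/
theorem statement18 (p h : ℕ) (hp : Nat.Prime p) (hp3 : 3 < p) (hh : 0 < h)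
    (F : Type) [Field F] [Fintype F] (hcard : Fintype.card F = p ^ h)
    (d : ℕ) (hd : p ^ h = 2 * d + 1) (heven : Even d) (e0 e1 e2 : F)
    (hcase :
      (e0 ^ d = -1 ∧ e1 ^ d = -1 ∧ e2 ^ d = 1) ∨
      (e0 ^ d = -1 ∧ e1 ^ d = 1 ∧ e2 ^ d = -1) ∨
      (e0 ^ d = 1 ∧ e1 ^ d = -1 ∧ e2 ^ d = -1)) :
    (8 * Nat.card {x : Projectivization F (Fin 3 → F) //
        MvPolynomial.eval x.rep (fermatSlice F d e0 e1 e2) = 0} : ℤ) =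
      3 * (p ^ h : ℤ) ^ 2 - 6 * (p ^ h : ℤ) + 43 := by
  classical
  -- basic numeric facts
  have hp5 : 5 ≤ p := by
    have h4 : p ≠ 4 := by rintro rfl; norm_num at hp
    omega
  have hq5 : 5 ≤ p ^ h := le_trans hp5 (Nat.le_self_pow hh.ne' p)
  have hd2 : 2 ≤ d := by omega
  have hd0 : d ≠ 0 := by omega
  -- characteristic
  have hcharF : ringChar F = p := by
    have h1 : ringChar F ∣ p ^ h := by
      rw [← hcard]
      exact (CharP.cast_eq_zero_iff F (ringChar F) _).mp (FiniteField.cast_card_eq_zero F)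
    have hprime : (ringChar F).Prime := CharP.char_is_prime F (ringChar F)
    exact (Nat.prime_dvd_prime_iff_eq hprime hp).mp (hprime.dvd_of_dvd_pow h1)
  have hchar2 : ringChar F ≠ 2 := by rw [hcharF]; omega
  haveI hCharP : CharP F p := hcharF ▸ ringChar.charP F
  have hcd : Fintype.card F / 2 = d := by rw [hcard, hd]; omega
  -- quadratic character facts
  have hneg : quadraticChar F (-1) = 1 := by
    rw [quadraticChar_eq_pow_of_char_ne_two hchar2 (neg_ne_zero.mpr one_ne_zero), hcd,
      heven.neg_one_pow, if_pos rfl]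
  have hpow : ∀ a : F, ((quadraticChar F a : ℤ) : F) = a ^ d := by
    intro a; rw [quadraticChar_eq_pow_of_char_ne_two' hchar2, hcd]
  have hsmall : ∀ n : ℤ, n.natAbs ≤ 4 → ((n : F) = 0 ↔ n = 0) := by
    intro n hn
    constructor
    · intro h0
      have hdvd : (p : ℤ) ∣ n := (CharP.intCast_eq_zero_iff F p n).mp h0
      by_contra hne
      have h1 : (p : ℤ).natAbs ∣ n.natAbs := Int.natAbs_dvd_natAbs.mpr hdvd
      rw [Int.natAbs_natCast] at h1
      have := Nat.le_of_dvd (Int.natAbs_pos.mpr hne) h1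
      omega
    · rintro rfl; simp
  have htri : ∀ a : F, -1 ≤ quadraticChar F a ∧ quadraticChar F a ≤ 1 := by
    intro a; rcases tri' a with h1 | h1 | h1 <;> rw [h1] <;> omega
  have hbr : ∀ (a : F) (s : ℤ), s = 1 ∨ s = -1 → a ^ d = (s : F) →
      quadraticChar F a = s := by
    intro a s hs hads
    have h2 : ((quadraticChar F a : ℤ) : F) = ((s : ℤ) : F) := by rw [hpow, hads]
    have h3 : ((quadraticChar F a - s : ℤ) : F) = 0 := by push_cast; rw [sub_eq_zero]; push_cast at h2; exact h2
    have h4 : quadraticChar F a - s = 0 := by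
      refine (hsmall _ ?_).mp h3
      have := htri a
      omega
    omega
  -- evaluation of the polynomial
  have heval : ∀ x : Fin 3 → F, eval x (fermatSlice F d e0 e1 e2)
      = x 0 ^ d + x 1 ^ d + x 2 ^ d + (e0 * x 0 + e1 * x 1 + e2 * x 2) ^ d := by
    intro x; simp [fermatSlice]
  have hcond : ∀ x : Fin 3 → F, (eval x (fermatSlice F d e0 e1 e2) = 0 ↔
      quadraticChar F (x 0) + quadraticChar F (x 1) + quadraticChar F (x 2)
        + quadraticChar F (e0 * x 0 + e1 * x 1 + e2 * x 2) = 0) := by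
    intro x
    rw [heval x, ← hpow, ← hpow, ← hpow, ← hpow]
    rw [show ((quadraticChar F (x 0) : ℤ) : F) + ((quadraticChar F (x 1) : ℤ) : F)
        + ((quadraticChar F (x 2) : ℤ) : F)
        + ((quadraticChar F (e0 * x 0 + e1 * x 1 + e2 * x 2) : ℤ) : F)
      = ((quadraticChar F (x 0) + quadraticChar F (x 1) + quadraticChar F (x 2)
        + quadraticChar F (e0 * x 0 + e1 * x 1 + e2 * x 2) : ℤ) : F) by push_cast; ring]
    refine hsmall _ ?_
    have h1 := htri (x 0); have h2 := htri (x 1); have h3 := htri (x 2)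
    have h4 := htri (e0 * x 0 + e1 * x 1 + e2 * x 2)
    omega
  -- homogeneity
  have hhom : ∀ (c : F) (x : Fin 3 → F),
      eval (c • x) (fermatSlice F d e0 e1 e2) = c ^ d * eval x (fermatSlice F d e0 e1 e2) := by
    intro c x
    rw [heval, heval]
    simp only [Pi.smul_apply, smul_eq_mul]
    rw [show e0 * (c * x 0) + e1 * (c * x 1) + e2 * (c * x 2)
        = c * (e0 * x 0 + e1 * x 1 + e2 * x 2) from by ring,
      mul_pow, mul_pow, mul_pow, mul_pow]
    ring
  -- the projective-affine correspondence
  set PS := {x : Projectivization F (Fin 3 → F) //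
      MvPolynomial.eval x.rep (fermatSlice F d e0 e1 e2) = 0} with hPS
  set AS := {v : Fin 3 → F // v ≠ 0 ∧ eval v (fermatSlice F d e0 e1 e2) = 0} with hAS
  have hmk : ∀ (P : Projectivization F (Fin 3 → F)) (u : Fˣ)
      (hne : (u : F) • P.rep ≠ 0), Projectivization.mk F ((u : F) • P.rep) hne = P := by
    intro P u hne
    conv_rhs => rw [← Projectivization.mk_rep P]
    rw [Projectivization.mk_eq_mk_iff]
    exact ⟨u, rfl⟩
  have hsmulne : ∀ (P : Projectivization F (Fin 3 → F)) (u : Fˣ), (u : F) • P.rep ≠ 0 :=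
    fun P u => smul_ne_zero (Units.ne_zero u) (Projectivization.rep_nonzero P)
  let tf : PS × Fˣ → AS := fun Pa =>
    ⟨(Pa.2 : F) • Pa.1.1.rep, hsmulne Pa.1.1 Pa.2, by
      rw [hhom, Pa.1.2, mul_zero]⟩
  have hbij : Function.Bijective tf := by
    constructor
    · rintro ⟨⟨P, hP⟩, a⟩ ⟨⟨Q, hQ⟩, b⟩ hEq
      have hv : (a : F) • P.rep = (b : F) • Q.rep := congrArg Subtype.val hEq
      have h12 : Projectivization.mk F ((a : F) • P.rep) (hsmulne P a)
          = Projectivization.mk F ((b : F) • Q.rep) (hsmulne Q b) := by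
        rw [Projectivization.mk_eq_mk_iff]
        exact ⟨1, by rw [one_smul]; exact hv.symm⟩
      have hPQ : P = Q := by rw [← hmk P a (hsmulne P a), h12, hmk Q b (hsmulne Q b)]
      subst hPQ
      have hab : ((a : F) - (b : F)) • P.rep = 0 := by rw [sub_smul, hv, sub_self]
      have hab2 : (a : F) = (b : F) := by
        rcases smul_eq_zero.mp hab with hzz | hzz
        · linear_combination hzz
        · exact absurd hzz (Projectivization.rep_nonzero P)
      exact Prod.ext (Subtype.ext rfl) (Units.ext hab2)
    · rintro ⟨v, hv0, hveval⟩
      obtain ⟨a, ha⟩ := Projectivization.exists_smul_eq_mk_rep F v hv0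
      have hrep : (Projectivization.mk F v hv0).rep = (a : F) • v := by
        rw [← ha]; rfl
      refine ⟨⟨⟨Projectivization.mk F v hv0, ?_⟩, a⁻¹⟩, ?_⟩
      · rw [hrep, hhom, hveval, mul_zero]
      · apply Subtype.ext
        show ((a⁻¹ : Fˣ) : F) • (Projectivization.mk F v hv0).rep = v
        rw [hrep, smul_smul, Units.inv_mul, one_smul]
  -- counting
  have hcount1 : Nat.card AS = Nat.card PS * (p ^ h - 1) := by
    rw [← Nat.card_congr (Equiv.ofBijective tf hbij), Nat.card_prod]
    congr 1
    rw [Nat.card_eq_fintype_card, Fintype.card_units, hcard]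
  set N : ℕ := (univ.filter fun v : Fin 3 → F =>
      eval v (fermatSlice F d e0 e1 e2) = 0).card with hN
  have h0mem : (0 : Fin 3 → F) ∈ univ.filter (fun v : Fin 3 → F =>
      eval v (fermatSlice F d e0 e1 e2) = 0) := by
    simp only [Finset.mem_filter, Finset.mem_univ, true_and]
    rw [heval]
    simp [zero_pow hd0]
  have hN1 : 1 ≤ N := Finset.card_pos.mpr ⟨0, h0mem⟩
  have hcount2 : Nat.card AS = N - 1 := by
    rw [Nat.card_eq_fintype_card, Fintype.card_subtype]
    rw [show (univ.filter fun v : Fin 3 → F => v ≠ 0 ∧ eval v (fermatSlice F d e0 e1 e2) = 0)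
      = (univ.filter fun v : Fin 3 → F => eval v (fermatSlice F d e0 e1 e2) = 0).erase 0 from ?_]
    · rw [Finset.card_erase_of_mem h0mem]
    ext v
    simp only [Finset.mem_filter, Finset.mem_univ, true_and, Finset.mem_erase]
    try tauto
  -- identify N with the triple count
  have hNt : N = (univ.filter (fun t : F × F × F =>
      quadraticChar F t.1 + quadraticChar F t.2.1 + quadraticChar F t.2.2
        + quadraticChar F (e0 * t.1 + e1 * t.2.1 + e2 * t.2.2) = 0)).card := by
    apply Finset.card_equiv (e3equiv F)
    intro x
    simp only [Finset.mem_filter, Finset.mem_univ, true_and]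
    exact hcond x
  -- apply the main count
  have hcase' : (quadraticChar F e0 = -1 ∧ quadraticChar F e1 = -1 ∧ quadraticChar F e2 = 1) ∨
      (quadraticChar F e0 = -1 ∧ quadraticChar F e1 = 1 ∧ quadraticChar F e2 = -1) ∨
      (quadraticChar F e0 = 1 ∧ quadraticChar F e1 = -1 ∧ quadraticChar F e2 = -1) := by
    have hbr1 : ∀ a : F, a ^ d = -1 → quadraticChar F a = -1 := fun a ha =>
      hbr a (-1) (Or.inr rfl) (by rw [ha]; norm_num)
    have hbr2 : ∀ a : F, a ^ d = 1 → quadraticChar F a = 1 := fun a ha =>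
      hbr a 1 (Or.inl rfl) (by rw [ha]; norm_num)
    rcases hcase with ⟨h1, h2, h3⟩ | ⟨h1, h2, h3⟩ | ⟨h1, h2, h3⟩
    · exact Or.inl ⟨hbr1 _ h1, hbr1 _ h2, hbr2 _ h3⟩
    · exact Or.inr (Or.inl ⟨hbr1 _ h1, hbr2 _ h2, hbr1 _ h3⟩)
    · exact Or.inr (Or.inr ⟨hbr2 _ h1, hbr1 _ h2, hbr1 _ h3⟩)
  have hcc := count_cond hchar2 hneg hcase'
  rw [← hNt] at hcc
  rw [hcard] at hcc
  -- final arithmetic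
  set q : ℤ := (p ^ h : ℤ) with hqdef
  have hqcast : ((p ^ h : ℕ) : ℤ) = q := by push_cast [hqdef]; ring
  rw [hqcast] at hcc
  have hq5' : (5 : ℤ) ≤ q := by rw [hqdef]; exact_mod_cast hq5
  have k1 : (Nat.card PS : ℤ) * (q - 1) = (N : ℤ) - 1 := by
    have := hcount2.symm.trans hcount1
    have hc : ((N - 1 : ℕ) : ℤ) = (N : ℤ) - 1 := by
      push_cast [Nat.cast_sub hN1]; ring
    rw [← hc, this]
    push_cast [Nat.cast_sub (show 1 ≤ p ^ h by omega)]
    ring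
  have hqne : q - 1 ≠ 0 := by omega
  apply mul_right_cancel₀ hqne
  calc (8 * Nat.card PS : ℤ) * (q - 1) = 8 * ((Nat.card PS : ℤ) * (q - 1)) := by ring
    _ = 8 * ((N : ℤ) - 1) := by rw [k1]
    _ = (q - 1) * (3 * q ^ 2 - 6 * q + 43) + 8 - 8 := by rw [← hcc]; ring
    _ = (3 * q ^ 2 - 6 * q + 43) * (q - 1) := by ring
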